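/- For all i ≥ 2, the modular elements of the rank-metric lattice L_i(n,m;q) are exactly the F_{q^m}-subspaces X of (F_{q^m})^n all of whose elements have rank at most i, together with the full space (F_{q^m})^n. -/

import Mathlib

open Submodule

/-- The rank of a vector `v ∈ L^n`: the `Fq`-dimension of the `Fq`-span of its entries. -/
noncomputable def rkVec (Fq : Type*) {L : Type*} [Field Fq] [Field L] [Algebra Fq L]
    {n : ℕ} (v : Fin n → L) : ℕ :=
  Module.finrank Fq ↥(Submodule.span Fq (Set.range v))

/-- The rank-metric lattice `L_i(n,m;q)`: subspaces of `L^n` spanned by their vectors of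
rank at most `i`. -/
def RML (Fq L : Type*) [Field Fq] [Field L] [Algebra Fq L] (n i : ℕ) :
    Set (Submodule L (Fin n → L)) :=
  {X | X = Submodule.span L {x | x ∈ X ∧ rkVec Fq x ≤ i}}

/-- The meet in the rank-metric lattice: span of the rank-`≤ i` vectors of the intersection. -/
def rmlMeet (Fq : Type*) {L : Type*} [Field Fq] [Field L] [Algebra Fq L] {n : ℕ} (i : ℕ)
    (X Y : Submodule L (Fin n → L)) : Submodule L (Fin n → L) :=
  Submodule.span L {x | x ∈ X ⊓ Y ∧ rkVec Fq x ≤ i}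

/-- `X` is a modular element of the rank-metric lattice `L_i`. -/
def IsModularElt (Fq : Type*) {L : Type*} [Field Fq] [Field L] [Algebra Fq L] {n : ℕ} (i : ℕ)
    (X : Submodule L (Fin n → L)) : Prop :=
  ∀ Y ∈ RML Fq L n i,
    Module.finrank L ↥(rmlMeet Fq i X Y) + Module.finrank L ↥(X ⊔ Y)
      = Module.finrank L ↥X + Module.finrank L ↥Y

set_option linter.unusedSectionVars false
set_option linter.unusedVariables false
set_option maxHeartbeats 1000000

section Aux
variable {Fq L : Type*} [Field Fq] [Field L] [Algebra Fq L] {n : ℕ}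
variable [FiniteDimensional Fq L]

lemma rk_le_finset (v : Fin n → L) (T : Finset L)
    (h : ∀ k, v k ∈ Submodule.span Fq (T : Set L)) : rkVec Fq v ≤ T.card := by
  have h1 : Submodule.span Fq (Set.range v) ≤ Submodule.span Fq (T : Set L) :=
    span_le.mpr (by rintro _ ⟨k, rfl⟩; exact h k)
  exact le_trans (Submodule.finrank_mono h1) (finrank_span_finset_le_card (R := Fq) T)

lemma rk_smul_le (c : L) (v : Fin n → L) : rkVec Fq (c • v) ≤ rkVec Fq v := by
  have h1 : Submodule.span Fq (Set.range (c • v)) ≤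
      (Submodule.span Fq (Set.range v)).map (LinearMap.mulLeft Fq c) := by
    apply span_le.mpr
    rintro _ ⟨k, rfl⟩
    exact ⟨v k, subset_span ⟨k, rfl⟩, by simp [LinearMap.mulLeft_apply, smul_eq_mul]⟩
  exact le_trans (Submodule.finrank_mono h1) (Submodule.finrank_map_le _ _)

lemma rk_smul {c : L} (hc : c ≠ 0) (v : Fin n → L) : rkVec Fq (c • v) = rkVec Fq v := by
  refine le_antisymm (rk_smul_le c v) ?_
  have := rk_smul_le (Fq := Fq) c⁻¹ (c • v)
  rwa [inv_smul_smul₀ hc] at this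

lemma rk_add_le (u w : Fin n → L) : rkVec Fq (u + w) ≤ rkVec Fq u + rkVec Fq w := by
  have h1 : Submodule.span Fq (Set.range (u + w)) ≤
      Submodule.span Fq (Set.range u) ⊔ Submodule.span Fq (Set.range w) := by
    apply span_le.mpr
    rintro _ ⟨k, rfl⟩
    exact add_mem (mem_sup_left (subset_span ⟨k, rfl⟩)) (mem_sup_right (subset_span ⟨k, rfl⟩))
  exact le_trans (Submodule.finrank_mono h1)
    (Submodule.finrank_add_le_finrank_add_finrank _ _)

lemma rk_zero : rkVec Fq (0 : Fin n → L) = 0 := by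
  have h : Submodule.span Fq (Set.range (0 : Fin n → L)) ≤ ⊥ :=
    span_le.mpr (by rintro _ ⟨k, rfl⟩; simp)
  rw [rkVec, le_bot_iff.mp h, finrank_bot]

lemma exists_decomp (v : Fin n → L) :
    ∃ (b : Fin (rkVec Fq v) → L) (c : Fin n → Fin (rkVec Fq v) → Fq),
      LinearIndependent Fq b ∧ (∀ k, v k = ∑ j, c k j • b j) ∧
      Submodule.span Fq (Set.range c) = ⊤ := by
  classical
  set V := Submodule.span Fq (Set.range v) with hV
  have hrk : Module.finrank Fq V = rkVec Fq v := rfl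
  let B : Module.Basis (Fin (rkVec Fq v)) Fq V := Module.finBasisOfFinrankEq Fq V hrk
  let v' : Fin n → V := fun k => ⟨v k, subset_span ⟨k, rfl⟩⟩
  refine ⟨fun j => (B j : L), fun k => B.equivFun (v' k), ?_, ?_, ?_⟩
  · exact B.linearIndependent.map' V.subtype (Submodule.ker_subtype V)
  · intro k
    have h := B.sum_equivFun (v' k)
    have h2 : ((∑ j, B.equivFun (v' k) j • B j : V) : L) = ∑ j, B.equivFun (v' k) j • (B j : L) := by
      push_cast [Submodule.coe_sum]
      rfl
    calc v k = ((v' k : V) : L) := rfl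
      _ = ((∑ j, B.equivFun (v' k) j • B j : V) : L) := by rw [h]
      _ = ∑ j, B.equivFun (v' k) j • (B j : L) := h2
  · have hv' : Submodule.span Fq (Set.range v') = ⊤ := by
      apply Submodule.map_injective_of_injective (Submodule.injective_subtype V)
      rw [Submodule.map_span, Submodule.map_top, Submodule.range_subtype]
      have himg : V.subtype '' Set.range v' = Set.range v := by
        ext y
        simp only [Set.mem_image, Set.mem_range]
        constructor
        · rintro ⟨w, ⟨k, rfl⟩, rfl⟩; exact ⟨k, rfl⟩
        · rintro ⟨k, rfl⟩; exact ⟨v' k, ⟨k, rfl⟩, rfl⟩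
      rw [himg]
    rw [eq_top_iff]
    rintro g -
    obtain ⟨u, rfl⟩ := B.equivFun.surjective g
    have hu : u ∈ Submodule.span Fq (Set.range v') := by rw [hv']; trivial
    have hmem := Submodule.apply_mem_span_image_of_mem_span
      (B.equivFun : V →ₗ[Fq] (Fin (rkVec Fq v) → Fq)) hu
    have hsub : ⇑(B.equivFun : V →ₗ[Fq] (Fin (rkVec Fq v) → Fq)) '' Set.range v' ⊆
        Set.range (fun k => B.equivFun (v' k)) := by
      rintro _ ⟨_, ⟨k, rfl⟩, rfl⟩; exact ⟨k, rfl⟩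
    exact Submodule.span_mono hsub hmem

lemma rk_piece_ge {r : ℕ} (b : Fin r → L) (c : Fin n → Fin r → Fq)
    (hb : LinearIndependent Fq b) (hc : Submodule.span Fq (Set.range c) = ⊤)
    (K : Finset (Fin r)) :
    K.card ≤ rkVec Fq (fun k => ∑ j ∈ K, c k j • b j) := by
  classical
  set xK : Fin n → L := fun k => ∑ j ∈ K, c k j • b j with hxK
  have hbj : ∀ j ∈ K, b j ∈ Submodule.span Fq (Set.range xK) := by
    intro j hj
    have hsingle : (Pi.single j (1 : Fq) : Fin r → Fq) ∈ Submodule.span Fq (Set.range c) := by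
      rw [hc]; trivial
    obtain ⟨f, hf⟩ := (mem_span_range_iff_exists_fun Fq).mp hsingle
    have key : ∑ k, f k • xK k = b j := by
      have e1 : ∀ j', (∑ k, f k * c k j') = (Pi.single j (1 : Fq) : Fin r → Fq) j' := by
        intro j'
        have := congrFun hf j'
        simpa [Finset.sum_apply] using this
      calc ∑ k, f k • xK k = ∑ k, ∑ j' ∈ K, (f k * c k j') • b j' := by
            simp [hxK, Finset.smul_sum, smul_smul]
        _ = ∑ j' ∈ K, (∑ k, f k * c k j') • b j' := by
            rw [Finset.sum_comm]
            simp [Finset.sum_smul]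
        _ = ∑ j' ∈ K, ((Pi.single j (1 : Fq) : Fin r → Fq) j') • b j' := by
            refine Finset.sum_congr rfl fun j' _ => by rw [e1]
        _ = b j := by
            rw [Finset.sum_eq_single j]
            · simp
            · intro j' _ hne; simp [Pi.single_eq_of_ne hne]
            · intro h; exact absurd hj h
    rw [← key]
    exact sum_mem fun k _ => smul_mem _ _ (subset_span ⟨k, rfl⟩)
  have hle : Submodule.span Fq (b '' ↑K) ≤ Submodule.span Fq (Set.range xK) :=
    span_le.mpr (by rintro _ ⟨j, hj, rfl⟩; exact hbj j (by simpa using hj))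
  have hcard : Module.finrank Fq (Submodule.span Fq (b '' ↑K)) = K.card := by
    have li : LinearIndependent Fq (fun j : {x // x ∈ K} => b ↑j) :=
      hb.comp _ Subtype.coe_injective
    have hr : (Set.range fun j : {x // x ∈ K} => b ↑j) = b '' ↑K := by
      ext y
      simp only [Set.mem_image, Set.mem_range, Finset.mem_coe, Subtype.exists,
        exists_prop]
    rw [← hr, finrank_span_eq_card li, Fintype.card_coe]
  calc K.card = Module.finrank Fq (Submodule.span Fq (b '' ↑K)) := hcard.symm
    _ ≤ rkVec Fq xK := Submodule.finrank_mono hle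

lemma not_modular_of_decomp {i : ℕ} (X : Submodule L (Fin n → L)) (x0 y1 y2 : Fin n → L)
    (hx0 : x0 ∈ X) (hrk : i < rkVec Fq x0) (hsum : x0 = y1 + y2)
    (h1 : rkVec Fq y1 ≤ i) (h2 : rkVec Fq y2 ≤ i) (hy1 : y1 ∉ X) :
    ¬ IsModularElt Fq i X := by
  intro hmod
  set Y : Submodule L (Fin n → L) := Submodule.span L {y1, y2} with hYdef
  have hy1Y : y1 ∈ Y := subset_span (Set.mem_insert _ _)
  have hy2Y : y2 ∈ Y := subset_span (Set.mem_insert_of_mem _ rfl)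
  have hYmem : Y ∈ RML Fq L n i := by
    refine le_antisymm ?_ ?_
    · refine span_le.mpr ?_
      rintro v hv
      rcases hv with rfl | hv
      · exact subset_span ⟨hy1Y, h1⟩
      · rcases hv with rfl
        exact subset_span ⟨hy2Y, h2⟩
    · exact span_le.mpr fun v hv => hv.1
  have hy1ne : y1 ≠ 0 := fun h => hy1 (h ▸ X.zero_mem)
  have hy2ne : y2 ≠ 0 := by
    intro h
    rw [h, add_zero] at hsum
    rw [hsum] at hrk
    omega
  have hmeet : rmlMeet Fq i X Y = ⊥ := by
    rw [rmlMeet, eq_bot_iff]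
    refine span_le.mpr ?_
    rintro v ⟨hvXY, hvrk⟩
    have hvX : v ∈ X := hvXY.1
    have hvY : v ∈ Y := hvXY.2
    obtain ⟨a, b, hab⟩ := mem_span_pair.mp hvY
    by_cases hba : a = b
    · subst hba
      have hv : v = a • x0 := by rw [hsum, smul_add, hab]
      by_cases ha : a = 0
      · simp [hv, ha, SetLike.mem_coe]
      · exfalso
        rw [hv, rk_smul ha] at hvrk
        omega
    · exfalso
      apply hy1
      have hmemX : v - b • x0 ∈ X := sub_mem hvX (X.smul_mem b hx0)
      have hveq : v - b • x0 = (a - b) • y1 := by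
        rw [hsum, ← hab]
        module
      have : y1 = (a - b)⁻¹ • (v - b • x0) := by
        rw [hveq, smul_smul, inv_mul_cancel₀ (sub_ne_zero.mpr hba), one_smul]
      rw [this]
      exact X.smul_mem _ hmemX
  have hsup : X ⊔ Y = X ⊔ Submodule.span L {y1} := by
    refine le_antisymm ?_ ?_
    · refine sup_le le_sup_left ?_
      refine span_le.mpr ?_
      rintro v hv
      rcases hv with h | h
      · rw [show v = y1 from h]
        exact mem_sup_right (subset_span rfl)
      · rw [show v = y2 from h]
        have hv2 : y2 = x0 - y1 := by rw [hsum]; abel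
        rw [hv2]
        exact sub_mem (mem_sup_left hx0) (mem_sup_right (subset_span rfl))
    · refine sup_le le_sup_left (le_trans (span_mono ?_) le_sup_right)
      intro v hv
      rw [show v = y1 from hv]
      exact Set.mem_insert _ _
  have hinf : X ⊓ Submodule.span L {y1} = ⊥ := by
    rw [eq_bot_iff]
    intro v hv
    rw [Submodule.mem_inf] at hv
    obtain ⟨hvX, hv1⟩ := hv
    obtain ⟨a, rfl⟩ := mem_span_singleton.mp hv1
    by_cases ha : a = 0
    · simp [ha]
    · exfalso
      apply hy1
      have h2' := X.smul_mem a⁻¹ hvX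
      rwa [smul_smul, inv_mul_cancel₀ ha, one_smul] at h2'
  have hdim1 : Module.finrank L ↥(Submodule.span L {y1}) = 1 := finrank_span_singleton hy1ne
  have hXY : Module.finrank L ↥(X ⊔ Y) = Module.finrank L ↥X + 1 := by
    have h := Submodule.finrank_sup_add_finrank_inf_eq X (Submodule.span L {y1})
    rw [hinf, hdim1] at h
    rw [hsup]
    simp only [finrank_bot] at h
    omega
  have hy2notin : y2 ∉ Submodule.span L {y1} := by
    intro h
    obtain ⟨cc, hcc⟩ := mem_span_singleton.mp h
    have hx0eq : x0 = (1 + cc) • y1 := by rw [hsum, ← hcc]; module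
    have hr := rk_smul_le (Fq := Fq) (1 + cc) y1
    rw [← hx0eq] at hr
    omega
  have hlt : Submodule.span L {y1} < Y := by
    refine lt_of_le_of_ne (span_mono ?_) ?_
    · intro v hv
      rw [show v = y1 from hv]
      exact Set.mem_insert _ _
    intro h
    exact hy2notin (by rw [h]; exact hy2Y)
  have hY2 : Module.finrank L ↥Y = 2 := by
    have hlow : 1 < Module.finrank L ↥Y := by
      have := Submodule.finrank_lt_finrank_of_lt hlt
      omega
    have hup : Module.finrank L ↥Y ≤ 2 := by
      classical
      have hset : ({y1, y2} : Set (Fin n → L)) =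
          ((({y1, y2} : Finset (Fin n → L))) : Set (Fin n → L)) := by simp
      have hle := finrank_span_finset_le_card (R := L) ({y1, y2} : Finset (Fin n → L))
      have hcard : ({y1, y2} : Finset (Fin n → L)).card ≤ 2 :=
        le_trans (Finset.card_insert_le _ _) (by simp)
      rw [hYdef, hset]
      exact le_trans hle hcard
    omega
  have hfin := hmod Y hYmem
  rw [hmeet, hXY, hY2] at hfin
  simp only [finrank_bot] at hfin
  omega

lemma exists_mid_rank {i : ℕ} (X : Submodule L (Fin n → L)) (hX : X ∈ RML Fq L n i)
    (z : Fin n → L) (hz : z ∈ X) (hzr : i < rkVec Fq z) :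
    ∃ x ∈ X, i < rkVec Fq x ∧ rkVec Fq x ≤ 2 * i := by
  have hXeq : X = Submodule.span L {x | x ∈ X ∧ rkVec Fq x ≤ i} := hX
  rw [hXeq] at hz
  have main : ∀ v, v ∈ Submodule.span L {x | x ∈ X ∧ rkVec Fq x ≤ i} →
      v ∈ X ∧ (rkVec Fq v ≤ i ∨ ∃ x ∈ X, i < rkVec Fq x ∧ rkVec Fq x ≤ 2 * i) := by
    intro v hv
    induction hv using span_induction with
    | mem x h => exact ⟨h.1, Or.inl h.2⟩
    | zero => exact ⟨X.zero_mem, Or.inl (by rw [rk_zero]; omega)⟩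
    | add u w hu hw ihu ihw =>
      refine ⟨X.add_mem ihu.1 ihw.1, ?_⟩
      rcases ihu.2 with h1 | h1
      · rcases ihw.2 with h2 | h2
        · have hle : rkVec Fq (u + w) ≤ 2 * i := le_trans (rk_add_le u w) (by omega)
          by_cases hc : rkVec Fq (u + w) ≤ i
          · exact Or.inl hc
          · exact Or.inr ⟨u + w, X.add_mem ihu.1 ihw.1, by omega, hle⟩
        · exact Or.inr h2
      · exact Or.inr h1
    | smul a x hx ih =>
      exact ⟨X.smul_mem a ih.1, ih.2.imp (fun h => le_trans (rk_smul_le a x) h) id⟩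
  obtain ⟨-, h⟩ := main z hz
  rcases h with h | h
  · omega
  · exact h

lemma not_modular_aux {i : ℕ} (hi : 2 ≤ i) (X : Submodule L (Fin n → L))
    (hXt : X ≠ ⊤) (x : Fin n → L) (hx : x ∈ X) (r : ℕ) (hr : rkVec Fq x = r)
    (hir : i < r) (hr2i : r ≤ 2 * i) (b : Fin r → L) (c : Fin n → Fin r → Fq)
    (hb : LinearIndependent Fq b) (hvk : ∀ k, x k = ∑ j, c k j • b j)
    (hc : Submodule.span Fq (Set.range c) = ⊤) : ¬ IsModularElt Fq i X := by
  classical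
  have hlo : i < rkVec Fq x := by omega
  have h0i : 0 < i := by omega
  have h1i : 1 < i := by omega
  have h0r : (0 : ℕ) < r := by omega
  have h1r : (1 : ℕ) < r := by omega
  let j0 : Fin r := ⟨0, h0r⟩
  let j1 : Fin r := ⟨1, h1r⟩
  let ji : Fin r := ⟨i, hir⟩
  set J0 : Finset (Fin r) := Finset.univ.filter (fun j => (j : ℕ) < i) with hJ0def
  set Jc : Finset (Fin r) := Finset.univ.filter (fun j => ¬ (j : ℕ) < i) with hJcdef
  have hJ0 : ∀ j : Fin r, j ∈ J0 ↔ (j : ℕ) < i := by intro j; simp [hJ0def]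
  have hJc : ∀ j : Fin r, j ∈ Jc ↔ ¬ (j : ℕ) < i := by intro j; simp [hJcdef]
  have hj0J0 : j0 ∈ J0 := (hJ0 _).mpr h0i
  have hj1J0 : j1 ∈ J0 := (hJ0 _).mpr h1i
  have hjiJc : ji ∈ Jc := (hJc _).mpr (lt_irrefl i)
  have hjiJ0 : ji ∉ J0 := by rw [hJ0]; exact lt_irrefl i
  have hj1ne0 : j1 ≠ j0 := by simp [j1, j0, Fin.ext_iff]
  have hbj0 : b j0 ≠ 0 := hb.ne_zero j0
  have hbj1 : b j1 ≠ 0 := hb.ne_zero j1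
  have hbji : b ji ≠ 0 := hb.ne_zero ji
  have hJ0card : J0.card = i := by
    have himg : J0 = Finset.image (Fin.castLE hir.le) Finset.univ := by
      ext j
      simp only [Finset.mem_image, Finset.mem_univ, true_and, hJ0]
      constructor
      · intro h; exact ⟨⟨(j : ℕ), h⟩, by ext; rfl⟩
      · rintro ⟨t, rfl⟩; exact t.isLt
    rw [himg, Finset.card_image_of_injective _ (Fin.castLE_injective hir.le)]
    simp
  have hsplitcard : J0.card + Jc.card = r := by
    have h := Finset.card_filter_add_card_filter_not
      (s := (Finset.univ : Finset (Fin r))) (p := fun j => (j : ℕ) < i)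
    simpa [hJ0def, hJcdef] using h
  have hJccard : Jc.card = r - i := by omega
  -- the pieces
  set y0 : Fin n → L := fun k => ∑ j ∈ J0, c k j • b j with hy0
  set z0 : Fin n → L := fun k => ∑ j ∈ Jc, c k j • b j with hz0
  set w3 : Fin n → L := fun k => c k ji • b j0 with hw3
  set w4 : Fin n → L := fun k => c k j0 • b ji with hw4
  set vi : Fin n → L := fun k => c k ji • b ji with hvi
  set v0 : Fin n → L := fun k => c k j0 • b j0 with hv0
  obtain ⟨k0, hk0⟩ : ∃ k0, Pi.single k0 (1 : L) ∉ X := by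
    by_contra hcon
    push_neg at hcon
    apply hXt
    rw [eq_top_iff]
    intro v _
    have hv : v = ∑ k, v k • (Pi.single k (1 : L) : Fin n → L) := by
      funext k'
      rw [Finset.sum_apply]
      simp [Pi.single_apply, mul_ite]
    rw [hv]
    exact sum_mem fun k _ => X.smul_mem _ (hcon k)
  set e : Fin n → L := Pi.single k0 (1 : L) with he
  have hek : ∀ k, e k = if k = k0 then 1 else 0 := by
    intro k
    rw [he, Pi.single_apply]
  -- basic splitting
  have hxk : ∀ k, x k = y0 k + z0 k := by
    intro k
    rw [hvk k]
    show _ = (∑ j ∈ J0, c k j • b j) + ∑ j ∈ Jc, c k j • b j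
    rw [hJ0def, hJcdef]
    exact (Finset.sum_filter_add_sum_filter_not Finset.univ _ _).symm
  have hxsplit : x = y0 + z0 := funext fun k => by rw [hxk k]; rfl
  -- rank upper bound helper
  have hrk_le : ∀ (v : Fin n → L) (T : Finset L),
      (∀ k, v k ∈ Submodule.span Fq (T : Set L)) → T.card ≤ i → rkVec Fq v ≤ i :=
    fun v T hmem hcard => le_trans (rk_le_finset v T hmem) hcard
  have hmemJ : ∀ (J : Finset (Fin r)) (k : Fin n),
      (∑ j ∈ J, c k j • b j) ∈ Submodule.span Fq ((J.image b : Finset L) : Set L) :=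
    fun J k => sum_mem fun j hj =>
      smul_mem _ _ (subset_span (Finset.mem_coe.mpr (Finset.mem_image_of_mem b hj)))
  have hy0rk : rkVec Fq y0 ≤ i := by
    refine hrk_le y0 (J0.image b) (fun k => by rw [hy0]; exact hmemJ J0 k) ?_
    exact le_trans Finset.card_image_le (le_of_eq hJ0card)
  have hz0rk : rkVec Fq z0 ≤ i := by
    refine hrk_le z0 (Jc.image b) (fun k => by rw [hz0]; exact hmemJ Jc k) ?_
    refine le_trans Finset.card_image_le ?_
    omega
  have hxz0 : x - y0 = z0 := by rw [hxsplit]; abel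
  -- y3 = y0 + w3
  have hy3rk : rkVec Fq (y0 + w3) ≤ i := by
    refine hrk_le _ (J0.image b) (fun k => ?_) (le_trans Finset.card_image_le (le_of_eq hJ0card))
    show y0 k + w3 k ∈ _
    rw [hy0, hw3]
    exact add_mem (hmemJ J0 k)
      (smul_mem _ _ (subset_span (Finset.mem_coe.mpr (Finset.mem_image_of_mem b hj0J0))))
  have hz3eq : ∀ k, (x - (y0 + w3)) k
      = (∑ j ∈ Jc.erase ji, c k j • b j) + c k ji • (b ji - b j0) := by
    intro k
    have h2 : z0 k = c k ji • b ji + ∑ j ∈ Jc.erase ji, c k j • b j := by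
      rw [hz0]; exact (Finset.add_sum_erase _ _ hjiJc).symm
    show x k - (y0 k + w3 k) = _
    rw [hxk k, h2, hw3, smul_sub]
    abel
  have hz3rk : rkVec Fq (x - (y0 + w3)) ≤ i := by
    refine hrk_le _ (insert (b ji - b j0) ((Jc.erase ji).image b)) (fun k => ?_) ?_
    · rw [hz3eq k]
      refine add_mem (sum_mem fun j hj => smul_mem _ _ (subset_span ?_))
        (smul_mem _ _ (subset_span ?_))
      · exact Finset.mem_coe.mpr (Finset.mem_insert_of_mem (Finset.mem_image_of_mem b hj))
      · exact Finset.mem_coe.mpr (Finset.mem_insert_self _ _)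
    · refine le_trans (Finset.card_insert_le _ _) ?_
      have h1 := Finset.card_image_le (s := Jc.erase ji) (f := b)
      have h2 : (Jc.erase ji).card = r - i - 1 := by
        rw [Finset.card_erase_of_mem hjiJc, hJccard]
      omega
  -- y4 = y0 + w4
  have hy4rk : rkVec Fq (y0 + w4) ≤ i := by
    refine hrk_le _ (insert (b j0 + b ji) ((J0.erase j0).image b)) (fun k => ?_) ?_
    · have h2 : y0 k = c k j0 • b j0 + ∑ j ∈ J0.erase j0, c k j • b j := by
        rw [hy0]; exact (Finset.add_sum_erase _ _ hj0J0).symm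
      have heq : y0 k + w4 k
          = (∑ j ∈ J0.erase j0, c k j • b j) + c k j0 • (b j0 + b ji) := by
        rw [h2, hw4, smul_add]
        abel
      show y0 k + w4 k ∈ _
      rw [heq]
      refine add_mem (sum_mem fun j hj => smul_mem _ _ (subset_span ?_))
        (smul_mem _ _ (subset_span ?_))
      · exact Finset.mem_coe.mpr (Finset.mem_insert_of_mem (Finset.mem_image_of_mem b hj))
      · exact Finset.mem_coe.mpr (Finset.mem_insert_self _ _)
    · refine le_trans (Finset.card_insert_le _ _) ?_
      have h1 := Finset.card_image_le (s := J0.erase j0) (f := b)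
      have h2 : (J0.erase j0).card = i - 1 := by
        rw [Finset.card_erase_of_mem hj0J0, hJ0card]
      omega
  have hz4eq : ∀ k, (x - (y0 + w4)) k = z0 k - c k j0 • b ji := by
    intro k
    show x k - (y0 k + w4 k) = _
    rw [hxk k, hw4]
    abel
  have hz4rk : rkVec Fq (x - (y0 + w4)) ≤ i := by
    refine hrk_le _ (Jc.image b) (fun k => ?_) ?_
    · rw [hz4eq k]
      refine sub_mem (by rw [hz0]; exact hmemJ Jc k) (smul_mem _ _ (subset_span ?_))
      exact Finset.mem_coe.mpr (Finset.mem_image_of_mem b hjiJc)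
    · refine le_trans Finset.card_image_le ?_
      omega
  -- x' = y0 + vi
  have hx'eq : (y0 + vi) = fun k => ∑ j ∈ insert ji J0, c k j • b j := by
    funext k
    show y0 k + vi k = _
    rw [hy0, hvi, Finset.sum_insert hjiJ0]
    abel
  have hx'rk : i + 1 ≤ rkVec Fq (y0 + vi) := by
    rw [hx'eq]
    have h := rk_piece_ge b c hb hc (insert ji J0)
    rwa [Finset.card_insert_of_notMem hjiJ0, hJ0card] at h
  -- y5 = v0 + b j1 • e
  have hy5rk : rkVec Fq (v0 + b j1 • e) ≤ i := by
    refine hrk_le _ ({b j0, b j1} : Finset L) (fun k => ?_) ?_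
    · show v0 k + b j1 • e k ∈ _
      rw [hv0]
      refine add_mem (smul_mem _ _ (subset_span ?_)) ?_
      · exact Finset.mem_coe.mpr (Finset.mem_insert_self _ _)
      · by_cases hk : k = k0
        · rw [hek k, if_pos hk, smul_eq_mul, mul_one]
          exact subset_span (Finset.mem_coe.mpr
            (Finset.mem_insert_of_mem (Finset.mem_singleton_self _)))
        · rw [hek k, if_neg hk, smul_eq_mul, mul_zero]
          exact zero_mem _
    · exact le_trans (Finset.card_insert_le _ _) (by simp; omega)
  have hj1mem : j1 ∈ (insert ji J0).erase j0 :=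
    Finset.mem_erase.mpr ⟨hj1ne0, Finset.mem_insert_of_mem hj1J0⟩
  have hz5eq : ∀ k, ((y0 + vi) - (v0 + b j1 • e)) k
      = (∑ j ∈ (insert ji J0).erase j0, c k j • b j) - b j1 * e k := by
    intro k
    have h1 : (∑ j ∈ insert ji J0, c k j • b j)
        = c k j0 • b j0 + ∑ j ∈ (insert ji J0).erase j0, c k j • b j :=
      (Finset.add_sum_erase _ _ (Finset.mem_insert_of_mem hj0J0)).symm
    show (y0 + vi) k - (v0 k + b j1 • e k) = _
    rw [congrFun hx'eq k, h1, hv0, smul_eq_mul]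
    abel
  have hz5rk : rkVec Fq ((y0 + vi) - (v0 + b j1 • e)) ≤ i := by
    refine hrk_le _ (((insert ji J0).erase j0).image b) (fun k => ?_) ?_
    · rw [hz5eq k]
      refine sub_mem (sum_mem fun j hj => smul_mem _ _ (subset_span
        (Finset.mem_coe.mpr (Finset.mem_image_of_mem b hj)))) ?_
      by_cases hk : k = k0
      · rw [hek k, if_pos hk, mul_one]
        exact subset_span (Finset.mem_coe.mpr (Finset.mem_image_of_mem b hj1mem))
      · rw [hek k, if_neg hk, mul_zero]
        exact zero_mem _
    · refine le_trans Finset.card_image_le ?_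
      rw [Finset.card_erase_of_mem (Finset.mem_insert_of_mem hj0J0),
        Finset.card_insert_of_notMem hjiJ0, hJ0card]
      omega
  -- case analysis
  by_cases hy0X : y0 ∈ X
  · by_cases hy3X : y0 + w3 ∈ X
    · by_cases hy4X : y0 + w4 ∈ X
      · -- all pieces in X : use x' and y5
        have hw3X : w3 ∈ X := by
          have h := X.sub_mem hy3X hy0X
          rwa [add_sub_cancel_left] at h
        have hw4X : w4 ∈ X := by
          have h := X.sub_mem hy4X hy0X
          rwa [add_sub_cancel_left] at h
        have hviX : vi ∈ X := by
          have h := X.smul_mem (b ji * (b j0)⁻¹) hw3X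
          have heq : (b ji * (b j0)⁻¹) • w3 = vi := by
            funext k
            show b ji * (b j0)⁻¹ * (c k ji • b j0) = c k ji • b ji
            rw [Algebra.smul_def, Algebra.smul_def]
            field_simp
          rwa [heq] at h
        have hv0X : v0 ∈ X := by
          have h := X.smul_mem (b j0 * (b ji)⁻¹) hw4X
          have heq : (b j0 * (b ji)⁻¹) • w4 = v0 := by
            funext k
            show b j0 * (b ji)⁻¹ * (c k j0 • b ji) = c k j0 • b j0
            rw [Algebra.smul_def, Algebra.smul_def]
            field_simp
          rwa [heq] at h
        have hx'X : y0 + vi ∈ X := X.add_mem hy0X hviX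
        have hy5notX : v0 + b j1 • e ∉ X := by
          intro h
          have h2 := X.sub_mem h hv0X
          rw [add_sub_cancel_left] at h2
          have h3 := X.smul_mem (b j1)⁻¹ h2
          rw [smul_smul, inv_mul_cancel₀ hbj1, one_smul] at h3
          exact hk0 (by rwa [he] at h3)
        exact not_modular_of_decomp X (y0 + vi) (v0 + b j1 • e)
          ((y0 + vi) - (v0 + b j1 • e)) hx'X (by omega)
          (by abel) hy5rk hz5rk hy5notX
      · exact not_modular_of_decomp X x (y0 + w4) (x - (y0 + w4)) hx hlo
          (by abel) hy4rk hz4rk hy4X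
    · exact not_modular_of_decomp X x (y0 + w3) (x - (y0 + w3)) hx hlo
        (by abel) hy3rk hz3rk hy3X
  · refine not_modular_of_decomp X x y0 (x - y0) hx hlo (by abel) hy0rk ?_ hy0X
    rw [hxz0]
    exact hz0rk

lemma not_modular_of_high_rank {i : ℕ} (hi : 2 ≤ i) (X : Submodule L (Fin n → L))
    (hXt : X ≠ ⊤) (x : Fin n → L) (hx : x ∈ X) (hlo : i < rkVec Fq x)
    (hhi : rkVec Fq x ≤ 2 * i) : ¬ IsModularElt Fq i X := by
  obtain ⟨b, c, hb, hvk, hc⟩ := exists_decomp (Fq := Fq) x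
  exact not_modular_aux hi X hXt x hx (rkVec Fq x) rfl hlo hhi b c hb hvk hc

end Aux

theorem modular_elements_characterization (q m n : ℕ) (hq : IsPrimePow q) (hn : 2 ≤ n)
    (hm : 2 ≤ m) (Fq L : Type) [Field Fq] [Field L] [Algebra Fq L] [Fintype Fq]
    (hcard : Fintype.card Fq = q) (hdim : Module.finrank Fq L = m)
    (i : ℕ) (hi : 2 ≤ i) (hin : i ≤ n)
    (X : Submodule L (Fin n → L)) (hX : X ∈ RML Fq L n i) :
    IsModularElt Fq i X ↔ ((∀ x ∈ X, rkVec Fq x ≤ i) ∨ X = ⊤) := by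
  haveI : FiniteDimensional Fq L := FiniteDimensional.of_finrank_pos (by rw [hdim]; omega)
  constructor
  · intro hmod
    by_contra hcon
    push_neg at hcon
    obtain ⟨⟨z, hzX, hzr⟩, hXt⟩ := hcon
    obtain ⟨x, hx, hl, hh⟩ := exists_mid_rank X hX z hzX (by omega)
    exact not_modular_of_high_rank hi X hXt x hx hl hh hmod
  · rintro (hall | rfl)
    · intro Y hY
      have hset : {v | v ∈ X ⊓ Y ∧ rkVec Fq v ≤ i}
          = ((X ⊓ Y : Submodule L (Fin n → L)) : Set (Fin n → L)) := by
        ext v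
        simp only [Set.mem_setOf_eq, SetLike.mem_coe]
        exact ⟨fun h => h.1, fun h => ⟨h, hall v (Submodule.mem_inf.mp h).1⟩⟩
      have hmeet : rmlMeet Fq i X Y = X ⊓ Y := by
        rw [rmlMeet, hset, Submodule.span_eq]
      rw [hmeet]
      have h := Submodule.finrank_sup_add_finrank_inf_eq X Y
      omega
    · intro Y hY
      have hset : {v | v ∈ (⊤ : Submodule L (Fin n → L)) ⊓ Y ∧ rkVec Fq v ≤ i}
          = {v | v ∈ Y ∧ rkVec Fq v ≤ i} := by
        ext v; simp
      have hmeet : rmlMeet Fq i (⊤ : Submodule L (Fin n → L)) Y = Y := by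
        rw [rmlMeet, hset]; exact hY.symm
      rw [hmeet, top_sup_eq]
      omega
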